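/- Let g = [[a,b,c],[d,e,f],[g₁,h,i]] ∈ GL_3(R) with bottom row nonzero, and define x₁ = (dg₁+eh+fi)/(g₁²+h²+i²), x₃ = (ag₁+bh+ci)/(g₁²+h²+i²), y₁ = √((d²+e²+f²)/(g₁²+h²+i²) − x₁²), x₂ = (1/y₁²)·((ad+be+cf)/(g₁²+h²+i²) − x₁x₃), and y₂ = (1/y₁)·√((a²+b²+c²)/(g₁²+h²+i²) − x₃² − x₂²y₁²). Then y₁ > 0, y₂ > 0, and there exist a sign ε ∈ {±1}, a scalar t = √(g₁²+h²+i²) > 0, and k ∈ SO_3(R) such that g = [[y₁y₂, y₁x₂, x₃],[0, y₁, x₁],[0,0,1]] · ε t k. -/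

import Mathlib

set_option maxHeartbeats 1000000


/-- Explicit Iwasawa decomposition for `GL₃(ℝ)`: with the quantities
`x₁, x₂, x₃, y₁, y₂` defined by the stated formulas from the entries of `g`, one has
`y₁ > 0`, `y₂ > 0`, and `g = [[y₁y₂, y₁x₂, x₃],[0, y₁, x₁],[0,0,1]] · ε t k` for a
sign `ε`, the scalar `t = √(g₂₀² + g₂₁² + g₂₂²) > 0` and some `k ∈ SO₃(ℝ)`. -/
theorem iwasawa_GL3 (g : Matrix (Fin 3) (Fin 3) ℝ) (hg : IsUnit g.det)
    (hrow : ¬(g 2 0 = 0 ∧ g 2 1 = 0 ∧ g 2 2 = 0))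
    (N x₁ x₃ y₁ x₂ y₂ : ℝ)
    (hN : N = g 2 0 ^ 2 + g 2 1 ^ 2 + g 2 2 ^ 2)
    (hx₁ : x₁ = (g 1 0 * g 2 0 + g 1 1 * g 2 1 + g 1 2 * g 2 2) / N)
    (hx₃ : x₃ = (g 0 0 * g 2 0 + g 0 1 * g 2 1 + g 0 2 * g 2 2) / N)
    (hy₁ : y₁ = Real.sqrt ((g 1 0 ^ 2 + g 1 1 ^ 2 + g 1 2 ^ 2) / N - x₁ ^ 2))
    (hx₂ : x₂ = (1 / y₁ ^ 2) *
      ((g 0 0 * g 1 0 + g 0 1 * g 1 1 + g 0 2 * g 1 2) / N - x₁ * x₃))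
    (hy₂ : y₂ = (1 / y₁) *
      Real.sqrt ((g 0 0 ^ 2 + g 0 1 ^ 2 + g 0 2 ^ 2) / N - x₃ ^ 2 - x₂ ^ 2 * y₁ ^ 2)) :
    0 < y₁ ∧ 0 < y₂ ∧
      ∃ ε : ℝ, (ε = 1 ∨ ε = -1) ∧
        ∃ k : Matrix (Fin 3) (Fin 3) ℝ, k * k.transpose = 1 ∧ k.det = 1 ∧
          g = !![y₁ * y₂, y₁ * x₂, x₃; 0, y₁, x₁; 0, 0, 1] *
                ((ε * Real.sqrt N) • k) := by
  have hdet : g.det ≠ 0 := by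
    intro h; rw [h] at hg; exact (by simpa using hg)
  have hdet3 : g.det = g 0 0 * (g 1 1 * g 2 2 - g 1 2 * g 2 1)
      - g 0 1 * (g 1 0 * g 2 2 - g 1 2 * g 2 0)
      + g 0 2 * (g 1 0 * g 2 1 - g 1 1 * g 2 0) := by
    rw [Matrix.det_fin_three]; ring
  -- shorthand
  set a := g 0 0 with ha; set b := g 0 1 with hb; set c := g 0 2 with hc
  set d := g 1 0 with hd; set e := g 1 1 with he; set f := g 1 2 with hf
  set p := g 2 0 with hp; set q := g 2 1 with hq; set r := g 2 2 with hr
  have hNpos : 0 < N := by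
    rw [hN]
    rcases (by tauto : p ≠ 0 ∨ q ≠ 0 ∨ r ≠ 0) with h | h | h <;> positivity
  have hN0 : N ≠ 0 := ne_of_gt hNpos
  -- Lagrange / Cauchy-Schwarz for rows 2,3
  have hCS : 0 < (d ^ 2 + e ^ 2 + f ^ 2) * N - (d * p + e * q + f * r) ^ 2 := by
    have hlag : (d ^ 2 + e ^ 2 + f ^ 2) * N - (d * p + e * q + f * r) ^ 2
        = (e * r - f * q) ^ 2 + (d * r - f * p) ^ 2 + (d * q - e * p) ^ 2 := by
      rw [hN]; ring
    rcases lt_or_ge 0 ((d ^ 2 + e ^ 2 + f ^ 2) * N - (d * p + e * q + f * r) ^ 2) with h | h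
    · exact h
    · exfalso
      rw [hlag] at h
      have n1 := sq_nonneg (e * r - f * q)
      have n2 := sq_nonneg (d * r - f * p)
      have n3 := sq_nonneg (d * q - e * p)
      have h1 : e * r - f * q = 0 := by
        have : (e * r - f * q) ^ 2 = 0 := le_antisymm (by linarith) n1
        exact pow_eq_zero_iff (two_ne_zero) |>.mp this
      have h2 : d * r - f * p = 0 := by
        have : (d * r - f * p) ^ 2 = 0 := le_antisymm (by linarith) n2
        exact pow_eq_zero_iff (two_ne_zero) |>.mp this
      have h3 : d * q - e * p = 0 := by
        have : (d * q - e * p) ^ 2 = 0 := le_antisymm (by linarith) n3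
        exact pow_eq_zero_iff (two_ne_zero) |>.mp this
      apply hdet
      rw [hdet3]
      linear_combination a * h1 - b * h2 + c * h3
  have hApos : 0 < (d ^ 2 + e ^ 2 + f ^ 2) / N - x₁ ^ 2 := by
    have : (d ^ 2 + e ^ 2 + f ^ 2) / N - x₁ ^ 2
        = ((d ^ 2 + e ^ 2 + f ^ 2) * N - (d * p + e * q + f * r) ^ 2) / N ^ 2 := by
      rw [hx₁]; field_simp
    rw [this]; positivity
  have hy₁pos : 0 < y₁ := by rw [hy₁]; exact Real.sqrt_pos.mpr hApos
  have hy₁0 : y₁ ≠ 0 := ne_of_gt hy₁pos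
  have hy₁sq : y₁ ^ 2 = (d ^ 2 + e ^ 2 + f ^ 2) / N - x₁ ^ 2 := by
    rw [hy₁, Real.sq_sqrt hApos.le]
  -- key polynomial identity
  have hpoly : ((a ^ 2 + b ^ 2 + c ^ 2) * N - (a * p + b * q + c * r) ^ 2)
      * ((d ^ 2 + e ^ 2 + f ^ 2) * N - (d * p + e * q + f * r) ^ 2)
      - ((a * d + b * e + c * f) * N - (d * p + e * q + f * r) * (a * p + b * q + c * r)) ^ 2
      = N * g.det ^ 2 := by
    rw [hdet3, hN]; ring
  set B := (a ^ 2 + b ^ 2 + c ^ 2) / N - x₃ ^ 2 - x₂ ^ 2 * y₁ ^ 2 with hB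
  have hv : N * x₃ = a * p + b * q + c * r := by
    rw [hx₃]; field_simp
  have hwN : N ^ 2 * y₁ ^ 2 = (d ^ 2 + e ^ 2 + f ^ 2) * N - (d * p + e * q + f * r) ^ 2 := by
    rw [hy₁sq, hx₁]; field_simp
  have hX : N ^ 2 * (x₂ * y₁ ^ 2) = (a * d + b * e + c * f) * N
      - (d * p + e * q + f * r) * (a * p + b * q + c * r) := by
    rw [hx₂, hx₁, hx₃]; field_simp
  have hNB : N * B = (a ^ 2 + b ^ 2 + c ^ 2) - N * x₃ ^ 2 - N * (x₂ ^ 2 * y₁ ^ 2) := by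
    rw [hB]; field_simp
  have hkey : B * (N ^ 3 * y₁ ^ 2) = g.det ^ 2 := by
    have hmul : N * (B * (N ^ 3 * y₁ ^ 2)) = N * g.det ^ 2 := by
      linear_combination
        (N ^ 3 * y₁ ^ 2) * hNB + ((a ^ 2 + b ^ 2 + c ^ 2) * N - (N * x₃) ^ 2) * hwN
        - (((d ^ 2 + e ^ 2 + f ^ 2) * N - (d * p + e * q + f * r) ^ 2) * (N * x₃ + (a * p + b * q + c * r))) * hv
        - (N ^ 2 * (x₂ * y₁ ^ 2) + ((a * d + b * e + c * f) * N
            - (d * p + e * q + f * r) * (a * p + b * q + c * r))) * hX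
        + hpoly
    exact mul_left_cancel₀ hN0 hmul
  have hd2 : 0 < g.det ^ 2 := lt_of_le_of_ne (sq_nonneg _) (Ne.symm (pow_ne_zero 2 hdet))
  have hBpos : 0 < B := by
    have h1 : (0:ℝ) < N ^ 3 * y₁ ^ 2 := by positivity
    have hBeq : B = g.det ^ 2 / (N ^ 3 * y₁ ^ 2) := (eq_div_iff (ne_of_gt h1)).mpr hkey
    rw [hBeq]
    exact div_pos hd2 h1
  have hy₂pos : 0 < y₂ := by
    rw [hy₂]; positivity
  have hy₂sq : (y₁ * y₂) ^ 2 = B := by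
    rw [hy₂]
    rw [show y₁ * (1 / y₁ * Real.sqrt B) = Real.sqrt B by field_simp]
    exact Real.sq_sqrt hBpos.le
  refine ⟨hy₁pos, hy₂pos, ?_⟩
  have hy₂0 : y₂ ≠ 0 := ne_of_gt hy₂pos
  set t := Real.sqrt N with ht
  have htpos : 0 < t := Real.sqrt_pos.mpr hNpos
  have ht0 : t ≠ 0 := ne_of_gt htpos
  have htsq : t ^ 2 = N := Real.sq_sqrt hNpos.le
  set ε : ℝ := if 0 < g.det then 1 else -1 with hε
  have hεcases : ε = 1 ∨ ε = -1 := by rw [hε]; split <;> simp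
  have hε0 : ε ≠ 0 := by rcases hεcases with h | h <;> rw [h] <;> norm_num
  have hεsq : ε ^ 2 = 1 := by rcases hεcases with h | h <;> rw [h] <;> norm_num
  have hεdet : 0 < ε * g.det := by
    rw [hε]
    by_cases h : 0 < g.det
    · rw [if_pos h]; simpa using h
    · rw [if_neg h]
      push_neg at h
      have hlt : g.det < 0 := lt_of_le_of_ne h hdet
      have := neg_pos.mpr hlt
      linarith [this]
  -- auxiliary scalar identities
  have hu : N * x₁ = d * p + e * q + f * r := by rw [hx₁]; field_simp
  have e2 : a * d + b * e + c * f = N * (x₂ * y₁ ^ 2 + x₁ * x₃) := by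
    refine mul_left_cancel₀ hN0 ?_
    linear_combination (-1 : ℝ) * hX - (a * p + b * q + c * r) * hu - (N * x₁) * hv
  have eA : d ^ 2 + e ^ 2 + f ^ 2 = N * (y₁ ^ 2 + x₁ ^ 2) := by
    refine mul_left_cancel₀ hN0 ?_
    linear_combination (-1 : ℝ) * hwN - (d * p + e * q + f * r + N * x₁) * hu
  have eB : a ^ 2 + b ^ 2 + c ^ 2 = N * ((y₁ * y₂) ^ 2 + (y₁ * x₂) ^ 2 + x₃ ^ 2) := by
    linear_combination (-1 : ℝ) * hNB - N * hy₂sq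
  -- the triangular matrix and its inverse
  set n : Matrix (Fin 3) (Fin 3) ℝ := !![y₁ * y₂, y₁ * x₂, x₃; 0, y₁, x₁; 0, 0, 1] with hn
  set m : Matrix (Fin 3) (Fin 3) ℝ :=
    !![1 / (y₁ * y₂), -x₂ / (y₁ * y₂), (x₁ * x₂ - x₃) / (y₁ * y₂);
       0, 1 / y₁, -x₁ / y₁; 0, 0, 1] with hm
  have hnm : n * m = 1 := by
    rw [hn, hm, Matrix.mul_fin_three, Matrix.one_fin_three]
    ext i j
    fin_cases i <;> fin_cases j <;> simp
    all_goals try field_simp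
    all_goals try ring
  have hmn : m * n = 1 := mul_eq_one_comm.mp hnm
  have hgeq : g = !![a, b, c; d, e, f; p, q, r] := by
    rw [ha, hb, hc, hd, he, hf, hp, hq, hr]
    exact Matrix.eta_fin_three g
  have hTn : n.transpose = !![y₁ * y₂, 0, 0; y₁ * x₂, y₁, 0; x₃, x₁, 1] := by
    rw [hn]; ext i j; fin_cases i <;> fin_cases j <;> rfl
  have hTg : (!![a, b, c; d, e, f; p, q, r]).transpose = !![a, d, p; b, e, q; c, f, r] := by
    ext i j; fin_cases i <;> fin_cases j <;> rfl
  have hGram : g * g.transpose = (N : ℝ) • (n * n.transpose) := by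
    rw [hgeq, hTg, hTn, hn, Matrix.mul_fin_three, Matrix.mul_fin_three]
    ext i j
    fin_cases i <;> fin_cases j <;> simp [Matrix.smul_apply]
    all_goals first
      | rfl
      | linear_combination eB
      | linear_combination e2
      | linear_combination eA
      | linear_combination hu
      | linear_combination (-1 : ℝ) * hu
      | linear_combination hv
      | linear_combination (-1 : ℝ) * hv
      | linear_combination hN
      | linear_combination (-1 : ℝ) * hN
  -- the orthogonal factor
  set c0 : ℝ := 1 / (ε * t) with hc0
  have hεt : (ε * t) * (ε * t) = N := by linear_combination t ^ 2 * hεsq + htsq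
  have hεt0 : ε * t ≠ 0 := mul_ne_zero hε0 ht0
  have hc00 : c0 * c0 * N = 1 := by
    rw [hc0, div_mul_div_comm, one_mul, hεt, one_div, inv_mul_cancel₀ hN0]
  -- relation between det g and the positive quantities
  have hSpos : 0 < t ^ 3 * (y₁ ^ 2 * y₂) := by positivity
  have hSsq : (ε * g.det) ^ 2 = (t ^ 3 * (y₁ ^ 2 * y₂)) ^ 2 := by
    linear_combination g.det ^ 2 * hεsq - hkey - N ^ 3 * y₁ ^ 2 * hy₂sq
      - (t ^ 4 + t ^ 2 * N + N ^ 2) * y₁ ^ 4 * y₂ ^ 2 * htsq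
  have hS : ε * g.det = t ^ 3 * (y₁ ^ 2 * y₂) := by
    have h0 : (ε * g.det - t ^ 3 * (y₁ ^ 2 * y₂)) * (ε * g.det + t ^ 3 * (y₁ ^ 2 * y₂)) = 0 := by
      linear_combination hSsq
    rcases mul_eq_zero.mp h0 with h | h
    · linarith
    · linarith
  have hdetval : g.det = ε * (t ^ 3 * (y₁ ^ 2 * y₂)) := by
    linear_combination ε * hS - g.det * hεsq
  refine ⟨ε, hεcases, c0 • (m * g), ?_, ?_, ?_⟩
  · -- orthogonality
    have h1 : (m * g) * (m * g).transpose = m * (g * g.transpose) * m.transpose := by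
      rw [Matrix.transpose_mul]
      simp [Matrix.mul_assoc]
    have h2 : m * (n * n.transpose) * m.transpose = 1 := by
      rw [← Matrix.mul_assoc, hmn, Matrix.one_mul, ← Matrix.transpose_mul, hmn,
        Matrix.transpose_one]
    rw [Matrix.transpose_smul, Matrix.smul_mul, Matrix.mul_smul, smul_smul, h1, hGram,
      Matrix.mul_smul, Matrix.smul_mul, h2, smul_smul, hc00, one_smul]
  · -- determinant
    have hdm : m.det = 1 / (y₁ ^ 2 * y₂) := by
      rw [hm, Matrix.det_fin_three]
      simp [Matrix.vecHead, Matrix.vecTail]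
      field_simp
    rw [Matrix.det_smul, Matrix.det_mul, hdm, hdetval, hc0]
    simp only [Fintype.card_fin]
    field_simp
    linear_combination (-1 : ℝ) * hεsq
  · -- the decomposition
    have hsc : (ε * t) • (c0 • (m * g)) = m * g := by
      rw [smul_smul, hc0]
      rw [show ε * t * (1 / (ε * t)) = 1 by field_simp]
      rw [one_smul]
    rw [hsc, ← Matrix.mul_assoc, hnm, Matrix.one_mul]
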